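/- Let F be a field of characteristic 0 and let A ∈ M_n(F) be a nil-clean matrix. Then A is unipotent if and only if the trace of A equals n·1, where n·1 denotes the image of the integer n in F. -/

import Mathlib

/-- An element of a ring is *nil-clean* if it is the sum of an idempotent
and a nilpotent element. -/
def IsNilClean {R : Type*} [Ring R] (a : R) : Prop :=
  ∃ e n : R, e ^ 2 = e ∧ IsNilpotent n ∧ a = e + n

lemma idem_trace_eq_one {F : Type*} [Field F] [CharZero F] {n : ℕ}
    (E : Matrix (Fin n) (Fin n) F) (hE : E ^ 2 = E) (ht : E.trace = (n : F)) :
    E = 1 := by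
  set f := Matrix.toLin' E with hf
  have hff : f ∘ₗ f = f := by
    rw [hf, ← Matrix.toLin'_mul, ← pow_two, hE]
  obtain ⟨p, hp⟩ := (LinearMap.isProj_iff_isIdempotentElem f).mpr hff
  have htr : LinearMap.trace F _ f = (Module.finrank F p : F) := hp.trace
  have htr2 : LinearMap.trace F _ f = E.trace := by
    rw [hf, LinearMap.trace_eq_matrix_trace F (Pi.basisFun F (Fin n)),
      LinearMap.toMatrix_eq_toMatrix', LinearMap.toMatrix'_toLin']
  have hfr : Module.finrank F p = n := by
    have : ((Module.finrank F p : ℕ) : F) = ((n : ℕ) : F) := by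
      rw [← htr, htr2, ht]
    exact_mod_cast this
  have hptop : p = ⊤ := by
    apply Submodule.eq_top_of_finrank_eq
    simp [hfr]
  have hfid : f = LinearMap.id := by
    apply LinearMap.ext
    intro x
    exact hp.map_id x (hptop ▸ Submodule.mem_top)
  have : Matrix.toLin' E = Matrix.toLin' (1 : Matrix (Fin n) (Fin n) F) := by
    rw [← hf, hfid, Matrix.toLin'_one]
  exact Matrix.toLin'.injective this

/-- Over a field of characteristic `0`, a nil-clean `n × n` matrix is unipotent
iff its trace is `n·1`. -/
theorem stmt_7 {F : Type*} [Field F] [CharZero F] {n : ℕ}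
    (A : Matrix (Fin n) (Fin n) F) (hA : IsNilClean A) :
    IsNilpotent (A - 1) ↔ A.trace = (n : F) := by
  constructor
  · intro h
    have := (Matrix.isNilpotent_trace_of_isNilpotent h).eq_zero
    rw [Matrix.trace_sub, Matrix.trace_one, sub_eq_zero] at this
    simpa using this
  · intro h
    obtain ⟨E, N, hE, hN, rfl⟩ := hA
    have htN : N.trace = 0 := (Matrix.isNilpotent_trace_of_isNilpotent hN).eq_zero
    have htE : E.trace = (n : F) := by
      rw [Matrix.trace_add, htN, add_zero] at h
      exact h
    have : E = 1 := idem_trace_eq_one E hE htE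
    rw [this]
    simpa using hN
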